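/- If G is a mixed graph whose underlying graph is a tree (a mixed tree), then the characteristic polynomial of its η-Hermitian adjacency matrix H_η(G) equals the characteristic polynomial of the adjacency matrix of the underlying tree; in particular G and its underlying graph are cospectral. -/

import Mathlib

open Complex

lemma walk_aux {V : Type} {G : SimpleGraph V} (σ : Equiv.Perm V) (j : V)
    (hadj : ∀ l : ℕ, G.Adj (σ (σ^[l] j)) (σ^[l] j)) (m : ℕ) :
    ∃ p : G.Walk (σ^[m] j) j,
      p.support = ((List.range (m+1)).map (fun l => σ^[l] j)).reverse ∧ p.length = m := by
  induction m with
  | zero => exact ⟨SimpleGraph.Walk.nil, by simp [-Equiv.Perm.iterate_eq_pow], rfl⟩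
  | succ m ih =>
    obtain ⟨p, hs, hl⟩ := ih
    have hadj' : G.Adj (σ^[m+1] j) (σ^[m] j) := by
      rw [Function.iterate_succ_apply']; exact hadj m
    refine ⟨SimpleGraph.Walk.cons hadj' p, ?_, by rw [SimpleGraph.Walk.length_cons, hl]⟩
    rw [SimpleGraph.Walk.support_cons, hs, List.range_succ (n := m+1), List.map_append,
      List.reverse_append]
    rfl

lemma tree_perm_invol {V : Type} [Fintype V] [DecidableEq V] {G : SimpleGraph V}
    (htree : G.IsTree) (σ : Equiv.Perm V)
    (hadj : ∀ i, σ i ≠ i → G.Adj (σ i) i) : ∀ i, σ (σ i) = i := by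
  intro i
  by_contra h2
  have h1 : σ i ≠ i := fun h => h2 (by rw [h, h])
  set j := σ i with hj
  have hjne : σ j ≠ j := fun h => h1 (σ.injective h)
  have hnonfix : ∀ m : ℕ, σ (σ^[m] j) ≠ σ^[m] j := by
    intro m hEq
    have hEq2 : σ^[m+1] j = σ^[m] j := by
      rw [Function.iterate_succ_apply']; exact hEq
    rw [Function.iterate_succ_apply] at hEq2
    exact hjne ((σ.injective.iterate m) hEq2)
  have hper : j ∈ Function.periodicPts ⇑σ := by
    refine ⟨orderOf σ, orderOf_pos σ, ?_⟩
    show σ^[orderOf σ] j = j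
    rw [Equiv.Perm.iterate_eq_pow, pow_orderOf_eq_one]
    rfl
  set k := Function.minimalPeriod ⇑σ j with hk
  have hkper : σ^[k] j = j := Function.iterate_minimalPeriod
  have hkpos : 0 < k := Function.minimalPeriod_pos_of_mem_periodicPts hper
  have hk1 : k ≠ 1 := fun h => hjne (by simpa [h] using hkper)
  have hk2 : k ≠ 2 := by
    intro h
    rw [h] at hkper
    exact h2 (σ.injective (by simpa [hj, Function.iterate_succ_apply] using hkper))
  have hk3 : 3 ≤ k := by omega
  have hadj' : ∀ l : ℕ, G.Adj (σ (σ^[l] j)) (σ^[l] j) := fun l => hadj _ (hnonfix l)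
  obtain ⟨p, hs, hl⟩ := walk_aux σ j hadj' (k-1)
  have hik : σ^[k-1] j = i := by
    apply σ.injective
    have hkk : k - 1 + 1 = k := by omega
    have hthis : σ^[k-1+1] j = σ i := by rw [hkk, hkper]
    rw [Function.iterate_succ_apply'] at hthis
    exact hthis
  have hnodup : (p.copy hik rfl).support.Nodup := by
    rw [SimpleGraph.Walk.support_copy, hs, List.nodup_reverse]
    refine List.Nodup.map_on ?_ List.nodup_range
    intro x hx y hy hxy
    have hx' : x < k := by have := List.mem_range.mp hx; omega
    have hy' : y < k := by have := List.mem_range.mp hy; omega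
    exact Function.iterate_injOn_Iio_minimalPeriod hx' hy' hxy
  have hadjij : G.Adj i j := (hadj i h1).symm
  have hEqPath := SimpleGraph.isAcyclic_iff_path_unique.mp htree.IsAcyclic
    ⟨p.copy hik rfl, SimpleGraph.Walk.IsPath.mk' hnodup⟩ (SimpleGraph.Path.singleton hadjij)
  have hlen := congrArg (fun q : G.Path i j => q.val.length) hEqPath
  simp only [SimpleGraph.Path.singleton, SimpleGraph.Walk.length_copy, hl,
    SimpleGraph.Walk.length_cons, SimpleGraph.Walk.length_nil] at hlen
  omega

theorem stmt_4 {V : Type} [Fintype V] [DecidableEq V] (η : ℝ)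
    (A : V → V → Prop) [DecidableRel A] (hirr : ∀ x, ¬ A x x)
    (G : SimpleGraph V) [DecidableRel G.Adj]
    (hG : ∀ x y, G.Adj x y ↔ (x ≠ y ∧ (A x y ∨ A y x)))
    (H : Matrix V V ℂ)
    (hH : ∀ x y, H x y =
      if A x y ∧ A y x then 1
      else if A x y then Complex.exp (η * Complex.I)
      else if A y x then Complex.exp (-(η : ℂ) * Complex.I)
      else 0)
    (htree : G.IsTree) :
    Matrix.charpoly H = Matrix.charpoly (G.adjMatrix ℂ) := by
  have hHdiag : ∀ x, H x x = 0 := by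
    intro x; rw [hH]; simp [hirr x]
  have hH0 : ∀ x y, x ≠ y → ¬ G.Adj x y → H x y = 0 := by
    intro x y hne hn
    have hA : ¬ (A x y ∨ A y x) := fun h => hn ((hG x y).mpr ⟨hne, h⟩)
    push_neg at hA
    rw [hH]; simp [hA.1, hA.2]
  have hH1 : ∀ x y, G.Adj x y → H x y * H y x = 1 := by
    intro x y hadj
    have hor := ((hG x y).mp hadj).2
    have harg : (↑η * Complex.I) + (-↑η * Complex.I) = 0 := by ring
    have hexp : Complex.exp (↑η * Complex.I) * Complex.exp (-↑η * Complex.I) = 1 := by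
      rw [← Complex.exp_add, harg, Complex.exp_zero]
    rw [hH, hH]
    by_cases h1 : A x y <;> by_cases h2 : A y x
    · simp [h1, h2]
    · simp only [h1, h2, and_true, and_false, true_and, false_and, if_true, if_false]
      exact hexp
    · simp only [h1, h2, and_true, and_false, true_and, false_and, if_true, if_false]
      rw [mul_comm]; exact hexp
    · exact absurd hor (by tauto)
  rw [Matrix.charpoly, Matrix.charpoly, Matrix.det_apply, Matrix.det_apply]
  refine Finset.sum_congr rfl fun σ _ => ?_
  congr 1
  by_cases hcase : ∀ x, σ x ≠ x → G.Adj (σ x) x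
  · have hinv := tree_perm_invol htree σ hcase
    rw [← Finset.prod_filter_mul_prod_filter_not Finset.univ (fun x => σ x = x),
        ← Finset.prod_filter_mul_prod_filter_not Finset.univ (fun x => σ x = x)]
    congr 1
    · refine Finset.prod_congr rfl fun x hx => ?_
      have hfix : σ x = x := (Finset.mem_filter.mp hx).2
      rw [hfix, Matrix.charmatrix_apply_eq, Matrix.charmatrix_apply_eq, hHdiag]
      simp
    · have hne : ∀ x ∈ Finset.univ.filter (fun x => ¬ σ x = x), σ x ≠ x :=
        fun x hx => (Finset.mem_filter.mp hx).2
      have hmem : ∀ x (hx : x ∈ Finset.univ.filter (fun x => ¬ σ x = x)),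
          σ x ∈ Finset.univ.filter (fun x => ¬ σ x = x) := by
        intro x hx
        simp only [Finset.mem_filter, Finset.mem_univ, true_and]
        rw [hinv x]
        exact fun h => hne x hx h.symm
      have hP1 : ∏ x ∈ Finset.univ.filter (fun x => ¬ σ x = x),
          (Matrix.charmatrix H) (σ x) x = 1 := by
        refine Finset.prod_involution (fun a _ => σ a) ?_ ?_ hmem ?_
        · intro a ha
          have hnea := hne a ha
          rw [Matrix.charmatrix_apply_ne _ _ _ hnea,
              Matrix.charmatrix_apply_ne _ _ _ (by rw [hinv a]; exact fun h => hnea h.symm),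
              hinv a, neg_mul_neg, ← map_mul, hH1 _ _ (hcase a hnea), map_one]
        · intro a ha _; exact hne a ha
        · intro a ha; exact hinv a
      have hP2 : ∏ x ∈ Finset.univ.filter (fun x => ¬ σ x = x),
          (Matrix.charmatrix (G.adjMatrix ℂ)) (σ x) x = 1 := by
        refine Finset.prod_involution (fun a _ => σ a) ?_ ?_ hmem ?_
        · intro a ha
          have hnea := hne a ha
          rw [Matrix.charmatrix_apply_ne _ _ _ hnea,
              Matrix.charmatrix_apply_ne _ _ _ (by rw [hinv a]; exact fun h => hnea h.symm),
              hinv a, neg_mul_neg, ← map_mul]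
          have h1 : (G.adjMatrix ℂ) (σ a) a = 1 := by
            simp [SimpleGraph.adjMatrix_apply, hcase a hnea]
          have h2 : (G.adjMatrix ℂ) a (σ a) = 1 := by
            simp [SimpleGraph.adjMatrix_apply, (hcase a hnea).symm]
          rw [h1, h2, mul_one, map_one]
        · intro a ha _; exact hne a ha
        · intro a ha; exact hinv a
      rw [hP1, hP2]
  · push_neg at hcase
    obtain ⟨x, hx1, hx2⟩ := hcase
    rw [Finset.prod_eq_zero (Finset.mem_univ x), Finset.prod_eq_zero (Finset.mem_univ x)]
    · rw [Matrix.charmatrix_apply_ne _ _ _ hx1]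
      simp [SimpleGraph.adjMatrix_apply, hx2]
    · rw [Matrix.charmatrix_apply_ne _ _ _ hx1, hH0 _ _ hx1 hx2]
      simp
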